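/- Let S₁,…,Sₙ be pairwise disjoint polyominoes in ℤ×ℤ, each of which is y-monotone. Then there exists a unidirectional translational ordering in the horizontal direction: a permutation σ of {1,…,n} such that for all k < l and every natural number s, the translate S_{σ(k)} + (s,0) is disjoint from S_{σ(l)}. -/

import Mathlib

/-- Two cells of `ℤ × ℤ` are edge-adjacent iff they are at Euclidean distance 1. -/
def EdgeAdj (c d : ℤ × ℤ) : Prop := (c.1 - d.1).natAbs + (c.2 - d.2).natAbs = 1

/-- A polyomino: a finite nonempty edge-connected set of cells. -/
def IsPolyomino (S : Finset (ℤ × ℤ)) : Prop :=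
  S.Nonempty ∧ ∀ c ∈ S, ∀ d ∈ S,
    Relation.ReflTransGen (fun a b => a ∈ S ∧ b ∈ S ∧ EdgeAdj a b) c d

/-- `S` is y-monotone: every row of `S` is an interval of `ℤ`. -/
def YMonotone (S : Finset (ℤ × ℤ)) : Prop :=
  ∀ r a b c : ℤ, (a, r) ∈ S → (c, r) ∈ S → a ≤ b → b ≤ c → (b, r) ∈ S

/-- The horizontal translate `S + (s, 0)`. -/
def translateX (S : Finset (ℤ × ℤ)) (s : ℤ) : Finset (ℤ × ℤ) :=
  S.image fun c => (c.1 + s, c.2)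

/-- every row between rows of two cells is occupied -/
lemma occupies_between' {S : Finset (ℤ × ℤ)} {c d : ℤ × ℤ}
    (hpath : Relation.ReflTransGen (fun a b => a ∈ S ∧ b ∈ S ∧ EdgeAdj a b) c d)
    (hc : c ∈ S) : ∀ t : ℤ, c.2 ≤ t → t ≤ d.2 → ∃ x, (x, t) ∈ S := by
  induction hpath with
  | refl =>
    intro t h1 h2
    have ht : t = c.2 := le_antisymm h2 h1
    exact ⟨c.1, by rw [ht]; simpa using hc⟩
  | @tail b d hcb hstep ih =>
    intro t h1 h2
    obtain ⟨hbS, hdS, hadj⟩ := hstep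
    rcases le_or_gt t b.2 with h3 | h3
    · exact ih t h1 h3
    · have : (b.2 - d.2).natAbs ≤ 1 := by unfold EdgeAdj at hadj; omega
      have ht : t = d.2 := by omega
      exact ⟨d.1, by rw [ht]; simpa using hdS⟩

lemma occupies_between {S : Finset (ℤ × ℤ)} (hS : IsPolyomino S) {c d : ℤ × ℤ}
    (hc : c ∈ S) (hd : d ∈ S) {t : ℤ} (h1 : c.2 ≤ t) (h2 : t ≤ d.2) :
    ∃ x, (x, t) ∈ S :=
  occupies_between' (hS.2 c hc d hd) hc t h1 h2

/-- adjacent occupied rows share a column -/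
lemma overlap' {S : Finset (ℤ × ℤ)} {c d : ℤ × ℤ}
    (hpath : Relation.ReflTransGen (fun a b => a ∈ S ∧ b ∈ S ∧ EdgeAdj a b) c d) :
    ∀ t : ℤ, c.2 ≤ t → t + 1 ≤ d.2 → ∃ x, (x, t) ∈ S ∧ (x, t + 1) ∈ S := by
  induction hpath with
  | refl => intro t h1 h2; omega
  | @tail b d hcb hstep ih =>
    intro t h1 h2
    obtain ⟨hbS, hdS, hadj⟩ := hstep
    rcases le_or_gt (t + 1) b.2 with h3 | h3
    · exact ih t h1 h3
    · unfold EdgeAdj at hadj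
      have hb2 : b.2 = t := by omega
      have hd2 : d.2 = t + 1 := by omega
      have hb1 : b.1 = d.1 := by omega
      refine ⟨b.1, by rw [← hb2]; simpa using hbS, ?_⟩
      rw [hb1, ← hd2]; simpa using hdS

lemma overlap {S : Finset (ℤ × ℤ)} (hS : IsPolyomino S) {c d : ℤ × ℤ}
    (hc : c ∈ S) (hd : d ∈ S) {t : ℤ} (h1 : c.2 ≤ t) (h2 : t + 1 ≤ d.2) :
    ∃ x, (x, t) ∈ S ∧ (x, t + 1) ∈ S :=
  overlap' (hS.2 c hc d hd) t h1 h2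

/-- In row `r`, every cell of `A` is strictly left of every cell of `B`. -/
def LeftAt (A B : Finset (ℤ × ℤ)) (r : ℤ) : Prop :=
  ∀ a c : ℤ, (a, r) ∈ A → (c, r) ∈ B → a < c

lemma leftAt_of_witness {A B : Finset (ℤ × ℤ)} (hA : YMonotone A) (hB : YMonotone B)
    (hAB : Disjoint A B) {r a c : ℤ} (ha : (a, r) ∈ A) (hc : (c, r) ∈ B) (h : a < c) :
    LeftAt A B r := by
  intro a' c' ha' hc'
  by_contra h'
  push_neg at h'
  rcases le_or_gt a c' with h1 | h1
  · exact (Finset.disjoint_left.mp hAB (hA r a c' a' ha ha' h1 h')) hc'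
  · exact (Finset.disjoint_left.mp hAB ha) (hB r c' a c hc' hc h1.le h.le)

lemma leftAt_or {A B : Finset (ℤ × ℤ)} (hA : YMonotone A) (hB : YMonotone B)
    (hAB : Disjoint A B) {r a c : ℤ} (ha : (a, r) ∈ A) (hc : (c, r) ∈ B) :
    LeftAt A B r ∨ LeftAt B A r := by
  rcases lt_trichotomy a c with h | h | h
  · exact Or.inl (leftAt_of_witness hA hB hAB ha hc h)
  · exact absurd ha (by subst h; exact fun ha => (Finset.disjoint_left.mp hAB ha) hc)
  · exact Or.inr (leftAt_of_witness hB hA hAB.symm hc ha h)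

lemma leftAt_up {A B : Finset (ℤ × ℤ)} (hPA : IsPolyomino A) (hPB : IsPolyomino B)
    (hA : YMonotone A) (hB : YMonotone B) (hAB : Disjoint A B)
    {r : ℤ} {K : ℕ} {a a' b b' : ℤ}
    (haR : (a, r) ∈ A) (haT : (a', r + K) ∈ A) (hbR : (b, r) ∈ B) (hbT : (b', r + K) ∈ B)
    (h : LeftAt A B r) : ∀ k : ℕ, k ≤ K → LeftAt A B (r + k) := by
  intro k
  induction k with
  | zero => intro _; simpa using h
  | succ k ih =>
    intro hk
    have hprev : LeftAt A B (r + k) := ih (by omega)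
    have h1 : (a, r).2 ≤ r + (k : ℤ) := by show r ≤ r + (k : ℤ); omega
    have h2 : r + (k : ℤ) + 1 ≤ (a', r + (K : ℤ)).2 := by show _ ≤ r + (K : ℤ); omega
    obtain ⟨x, hx1, hx2⟩ := overlap hPA haR haT h1 h2
    obtain ⟨y, hy1, hy2⟩ := overlap hPB hbR hbT h1 h2
    have hxy : x < y := hprev x y hx1 hy1
    have : LeftAt A B (r + k + 1) := leftAt_of_witness hA hB hAB hx2 hy2 hxy
    have heq : r + ((k : ℤ) + 1) = r + k + 1 := by ring
    rw [show ((k + 1 : ℕ) : ℤ) = (k : ℤ) + 1 by push_cast; ring, heq]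
    exact this

/-- consistency of orientation across shared rows -/
lemma leftAt_trans_row {A B : Finset (ℤ × ℤ)} (hPA : IsPolyomino A) (hPB : IsPolyomino B)
    (hA : YMonotone A) (hB : YMonotone B) (hAB : Disjoint A B)
    {r r' : ℤ} {a a' b b' : ℤ}
    (hAr : (a, r) ∈ A) (hBr : (b, r) ∈ B) (hAr' : (a', r') ∈ A) (hBr' : (b', r') ∈ B)
    (h : LeftAt A B r) : LeftAt A B r' := by
  rcases le_total r r' with hle | hle
  · have hK : r' = r + ((r' - r).toNat : ℤ) := by omega
    rw [hK] at hAr' hBr' ⊢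
    exact leftAt_up hPA hPB hA hB hAB hAr hAr' hBr hBr' h _ le_rfl
  · rcases leftAt_or hA hB hAB hAr' hBr' with h' | h'
    · exact h'
    · exfalso
      have hab : a < b := h a b hAr hBr
      have hK : r = r' + ((r - r').toNat : ℤ) := by omega
      rw [hK] at hAr hBr
      have : LeftAt B A (r' + ((r - r').toNat : ℤ)) :=
        leftAt_up hPB hPA hB hA hAB.symm hBr' hBr hAr' hAr h' _ le_rfl
      exact absurd hab (not_lt.mpr (this b a hBr hAr).le)

/-- `i` is (somewhere, hence everywhere on shared rows) strictly left of `j`. -/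
def Lrel {n : ℕ} (S : Fin n → Finset (ℤ × ℤ)) (i j : Fin n) : Prop :=
  i ≠ j ∧ ∃ r a c : ℤ, (a, r) ∈ S i ∧ (c, r) ∈ S j ∧ a < c

/-- bottom (minimal) occupied row of a finset of cells -/
def botRow (T : Finset (ℤ × ℤ)) : ℤ := WithTop.untopD 0 (T.image Prod.snd).min

lemma botRow_exists {T : Finset (ℤ × ℤ)} (h : T.Nonempty) : ∃ x, (x, botRow T) ∈ T := by
  obtain ⟨m, hm⟩ := Finset.min_of_nonempty (h.image Prod.snd)
  have hb : botRow T = m := by unfold botRow; rw [hm]; rfl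
  obtain ⟨p, hp, hp2⟩ := Finset.mem_image.mp (Finset.mem_of_min hm)
  exact ⟨p.1, by rw [hb, ← hp2, Prod.mk.eta]; exact hp⟩

lemma botRow_le {T : Finset (ℤ × ℤ)} {a r : ℤ} (hp : (a, r) ∈ T) : botRow T ≤ r := by
  obtain ⟨m, hm⟩ := Finset.min_of_nonempty (Finset.Nonempty.image ⟨_, hp⟩ Prod.snd)
  have hb : botRow T = m := by unfold botRow; rw [hm]; rfl
  have h2 : (T.image Prod.snd).min ≤ (r : WithTop ℤ) :=
    Finset.min_le (Finset.mem_image.mpr ⟨(a, r), hp, rfl⟩)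
  rw [hm] at h2
  rw [hb]
  exact_mod_cast h2

section Main
variable {n : ℕ} {S : Fin n → Finset (ℤ × ℤ)}
variable (hpoly : ∀ i, IsPolyomino (S i))
    (hdisj : Pairwise fun i j : Fin n => Disjoint (S i) (S j))
    (hmono : ∀ i, YMonotone (S i))

include hpoly hdisj hmono

lemma lrel_leftAt {i j : Fin n} (h : Lrel S i j) {r' a' c' : ℤ}
    (ha' : (a', r') ∈ S i) (hc' : (c', r') ∈ S j) : LeftAt (S i) (S j) r' := by
  obtain ⟨hne, r, a, c, ha, hc, hlt⟩ := h
  exact leftAt_trans_row (hpoly i) (hpoly j) (hmono i) (hmono j) (hdisj hne)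
    ha hc ha' hc' (leftAt_of_witness (hmono i) (hmono j) (hdisj hne) ha hc hlt)

lemma lrel_asym {i j : Fin n} (h : Lrel S i j) (h' : Lrel S j i) : False := by
  obtain ⟨hne', r', a', c', ha', hc', hlt'⟩ := h'
  -- ha' : (a', r') ∈ S j, hc' : (c', r') ∈ S i
  have := lrel_leftAt hpoly hdisj hmono h hc' ha' c' a' hc' ha'
  omega

lemma lrel_rewire {p c q : Fin n} (hpq : p ≠ q) (h1 : Lrel S p c) (h2 : Lrel S c q)
    (hb1 : botRow (S p) ≤ botRow (S c)) (hb2 : botRow (S q) ≤ botRow (S c)) :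
    Lrel S p q := by
  set t := botRow (S c) with ht
  obtain ⟨xc, hxc⟩ := botRow_exists (hpoly c).1
  -- p occupies t
  obtain ⟨r1, a1, c1, ha1, hc1, -⟩ := h1.2
  have hr1 : t ≤ r1 := botRow_le hc1
  obtain ⟨xbp, hxbp⟩ := botRow_exists (hpoly p).1
  obtain ⟨xp, hxp⟩ := occupies_between (hpoly p) hxbp ha1
    (show ((xbp, botRow (S p)) : ℤ × ℤ).2 ≤ t from hb1) (show t ≤ ((a1, r1) : ℤ × ℤ).2 from hr1)
  -- q occupies t
  obtain ⟨r2, a2, c2, ha2, hc2, -⟩ := h2.2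
  have hr2 : t ≤ r2 := botRow_le ha2
  obtain ⟨xbq, hxbq⟩ := botRow_exists (hpoly q).1
  obtain ⟨xq, hxq⟩ := occupies_between (hpoly q) hxbq hc2
    (show ((xbq, botRow (S q)) : ℤ × ℤ).2 ≤ t from hb2) (show t ≤ ((c2, r2) : ℤ × ℤ).2 from hr2)
  have l1 : xp < xc := lrel_leftAt hpoly hdisj hmono h1 hxp hxc xp xc hxp hxc
  have l2 : xc < xq := lrel_leftAt hpoly hdisj hmono h2 hxc hxq xc xq hxc hxq
  exact ⟨hpq, t, xp, xq, hxp, hxq, l1.trans l2⟩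

end Main

/-- assemble a periodic cycle from a finite chain with a wrap-around edge -/
lemma mk_cycle {α : Type*} {R : α → α → Prop} (d : ℕ) (hd : 0 < d) (g : ℕ → α)
    (hedges : ∀ t, t + 1 < d → R (g t) (g (t + 1))) (hwrap : R (g (d - 1)) (g 0)) :
    ∃ f : ℕ → α, (∀ t, R (f t) (f (t + 1))) ∧ ∀ t, f (t + d) = f t := by
  refine ⟨fun t => g (t % d), fun t => ?_, fun t => by simp [Nat.add_mod_right]⟩
  have hkey : (t + 1) % d = (t % d + 1) % d := (Nat.mod_add_mod t d 1).symm
  rcases Nat.lt_or_ge (t % d + 1) d with h | h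
  · show R (g (t % d)) (g ((t + 1) % d))
    rw [hkey, Nat.mod_eq_of_lt h]
    exact hedges _ h
  · have hlt : t % d < d := Nat.mod_lt t hd
    have hs : t % d = d - 1 := by omega
    have h0 : (t + 1) % d = 0 := by rw [hkey]; have h2 : t % d + 1 = d := by omega
                                    rw [h2, Nat.mod_self]
    show R (g (t % d)) (g ((t + 1) % d))
    rw [h0, hs]
    exact hwrap

/-- no cycles in the Lrel relation -/
lemma no_cycle {n : ℕ} {S : Fin n → Finset (ℤ × ℤ)}
    (hasym : ∀ {i j : Fin n}, Lrel S i j → Lrel S j i → False)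
    (hrewire : ∀ {p c q : Fin n}, p ≠ q → Lrel S p c → Lrel S c q →
      botRow (S p) ≤ botRow (S c) → botRow (S q) ≤ botRow (S c) → Lrel S p q) :
    ¬ ∃ k : ℕ, 0 < k ∧ ∃ f : ℕ → Fin n,
      (∀ t, Lrel S (f t) (f (t + 1))) ∧ ∀ t, f (t + k) = f t := by
  intro hex
  classical
  obtain ⟨hk, f, hf, hp⟩ := Nat.find_spec hex
  set k := Nat.find hex with hkdef
  -- periodicity modulo k
  have hrep : ∀ j t, f (t + k * j) = f t := by
    intro j
    induction j with
    | zero => intro t; simp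
    | succ j ih =>
      intro t
      have : t + k * (j + 1) = (t + k * j) + k := by ring
      rw [this, hp, ih]
  have hmod : ∀ t, f t = f (t % k) := by
    intro t
    conv_lhs => rw [← Nat.mod_add_div t k]
    rw [hrep]
  rcases Nat.lt_or_ge k 2 with hk2 | hk2
  · -- k = 1 : self-loop
    have hk1 : k = 1 := by omega
    have := hf 0
    rw [show (0 + 1) = 0 + k by omega, hp] at this
    exact this.1 rfl
  · -- pick m in range k maximizing botRow (S (f m))
    obtain ⟨m, hm, hmax⟩ := Finset.exists_max_image (Finset.range k)
      (fun t => botRow (S (f t))) ⟨0, Finset.mem_range.mpr (by omega)⟩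
    have hmaxall : ∀ t : ℕ, botRow (S (f t)) ≤ botRow (S (f m)) := by
      intro t
      rw [hmod t]
      exact hmax _ (Finset.mem_range.mpr (Nat.mod_lt t (by omega)))
    set p := f (m + k - 1) with hpdef
    set q := f (m + 1) with hqdef
    have hpc : Lrel S p (f m) := by
      have := hf (m + k - 1)
      rwa [show m + k - 1 + 1 = m + k by omega, hp] at this
    have hcq : Lrel S (f m) q := hf m
    by_cases hpq : p = q
    · exact hasym hpc (by rw [hpq]; exact hcq)
    · have hLpq : Lrel S p q := hrewire hpq hpc hcq (hmaxall _) (hmaxall _)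
      obtain ⟨f', hf', hp'⟩ := mk_cycle (R := Lrel S) (k - 1) (by omega) (fun t => f (m + 1 + t))
        (fun t ht => by
          have := hf (m + 1 + t)
          rwa [show m + 1 + t + 1 = m + 1 + (t + 1) by omega] at this)
        (by
          show Lrel S (f (m + 1 + (k - 1 - 1))) (f (m + 1 + 0))
          rw [show m + 1 + (k - 1 - 1) = m + k - 1 by omega, show m + 1 + 0 = m + 1 by omega]
          exact hLpq)
      exact Nat.find_min hex (show k - 1 < k by omega) ⟨by omega, f', hf', hp'⟩

/-- in any nonempty set of indices there is one that is not left of any other -/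
lemma exists_sink {n : ℕ} {S : Fin n → Finset (ℤ × ℤ)}
    (hnc : ¬ ∃ k : ℕ, 0 < k ∧ ∃ f : ℕ → Fin n,
      (∀ t, Lrel S (f t) (f (t + 1))) ∧ ∀ t, f (t + k) = f t)
    (T : Finset (Fin n)) (hT : T.Nonempty) :
    ∃ m ∈ T, ∀ j ∈ T, ¬ Lrel S m j := by
  by_contra hcon
  push_neg at hcon
  classical
  choose g hg1 hg2 using hcon
  obtain ⟨t0, ht0⟩ := hT
  let F : {x // x ∈ T} → {x // x ∈ T} := fun x => ⟨g x.1 x.2, hg1 x.1 x.2⟩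
  let f : ℕ → {x // x ∈ T} := fun t => F^[t] ⟨t0, ht0⟩
  have hedge : ∀ t, Lrel S (f t).1 (f (t + 1)).1 := by
    intro t
    have h1 : f (t + 1) = F (f t) := Function.iterate_succ_apply' F t _
    rw [h1]
    exact hg2 _ _
  obtain ⟨a, b, hab, hfab⟩ := Finite.exists_ne_map_eq_of_infinite f
  -- wlog a < b
  rcases Nat.lt_or_ge a b with hlt | hge
  · refine hnc ⟨b - a, by omega, ?_⟩
    obtain ⟨f', h1, h2⟩ := mk_cycle (R := Lrel S) (b - a) (by omega)
      (fun t => (f (a + t)).1)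
      (fun t ht => by
        have := hedge (a + t)
        rwa [show a + t + 1 = a + (t + 1) by omega] at this)
      (by
        show Lrel S (f (a + (b - a - 1))).1 (f (a + 0)).1
        have := hedge (a + (b - a - 1))
        rw [show a + (b - a - 1) + 1 = b by omega] at this
        rw [show a + 0 = a by omega, hfab]
        exact this)
    exact ⟨f', h1, h2⟩
  · have hlt : b < a := by omega
    refine hnc ⟨a - b, by omega, ?_⟩
    obtain ⟨f', h1, h2⟩ := mk_cycle (R := Lrel S) (a - b) (by omega)
      (fun t => (f (b + t)).1)
      (fun t ht => by
        have := hedge (b + t)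
        rwa [show b + t + 1 = b + (t + 1) by omega] at this)
      (by
        show Lrel S (f (b + (a - b - 1))).1 (f (b + 0)).1
        have := hedge (b + (a - b - 1))
        rw [show b + (a - b - 1) + 1 = a by omega] at this
        rw [show b + 0 = b by omega, ← hfab]
        exact this)
    exact ⟨f', h1, h2⟩

/-- build the ordering list -/
lemma exists_chainlist {n : ℕ} {S : Fin n → Finset (ℤ × ℤ)}
    (hnc : ¬ ∃ k : ℕ, 0 < k ∧ ∃ f : ℕ → Fin n,
      (∀ t, Lrel S (f t) (f (t + 1))) ∧ ∀ t, f (t + k) = f t) :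
    ∀ (N : ℕ) (T : Finset (Fin n)), T.card = N →
      ∃ l : List (Fin n), l.Nodup ∧ l.toFinset = T ∧
        l.Pairwise fun a b => ¬ Lrel S a b := by
  intro N
  induction N with
  | zero =>
    intro T hT
    rw [Finset.card_eq_zero] at hT
    exact ⟨[], by simp [hT]⟩
  | succ N ih =>
    intro T hT
    have hne : T.Nonempty := Finset.card_pos.mp (by omega)
    obtain ⟨m, hmT, hsink⟩ := exists_sink hnc T hne
    obtain ⟨l', hnd', htf', hpw'⟩ := ih (T.erase m) (by rw [Finset.card_erase_of_mem hmT, hT]; rfl)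
    refine ⟨m :: l', ?_, ?_, ?_⟩
    · refine List.nodup_cons.mpr ⟨fun hmem => ?_, hnd'⟩
      have : m ∈ T.erase m := htf' ▸ List.mem_toFinset.mpr hmem
      exact (Finset.mem_erase.mp this).1 rfl
    · rw [List.toFinset_cons, htf', Finset.insert_erase hmT]
    · refine List.pairwise_cons.mpr ⟨fun b hb => ?_, hpw'⟩
      have : b ∈ T.erase m := htf' ▸ List.mem_toFinset.mpr hb
      exact hsink b (Finset.mem_of_mem_erase this)

/-- A system of pairwise disjoint y-monotone polyominoes admits a unidirectional
translational ordering in the horizontal direction. -/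
theorem ymonotone_exists_horizontal_UTO (n : ℕ) (S : Fin n → Finset (ℤ × ℤ))
    (hpoly : ∀ i, IsPolyomino (S i))
    (hdisj : Pairwise fun i j => Disjoint (S i) (S j))
    (hmono : ∀ i, YMonotone (S i)) :
    ∃ σ : Equiv.Perm (Fin n), ∀ k l : Fin n, k < l → ∀ s : ℕ,
      Disjoint (translateX (S (σ k)) s) (S (σ l)) := by
  classical
  have hnc := no_cycle (S := S)
    (fun h h' => lrel_asym hpoly hdisj hmono h h')
    (fun hpq h1 h2 hb1 hb2 => lrel_rewire hpoly hdisj hmono hpq h1 h2 hb1 hb2)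
  obtain ⟨l, hnd, htf, hpw⟩ := exists_chainlist hnc (Finset.univ.card) Finset.univ rfl
  have hmem : ∀ x, x ∈ l := fun x => List.mem_toFinset.mp (htf ▸ Finset.mem_univ x)
  have hlen : l.length = n := by
    rw [← List.toFinset_card_of_nodup hnd] at *
    rw [htf, Finset.card_univ, Fintype.card_fin]
  let e : Fin l.length ≃ Fin n := List.Nodup.getEquivOfForallMemList l hnd hmem
  let σ : Equiv.Perm (Fin n) := (finCongr hlen.symm).trans e
  have hσ : ∀ k : Fin n, σ k = l.get (finCongr hlen.symm k) := fun k => rfl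
  refine ⟨σ, fun k l' hkl s => ?_⟩
  have hne : σ k ≠ σ l' := fun h => absurd (σ.injective h) (ne_of_lt hkl)
  have hnl : ¬ Lrel S (σ k) (σ l') := by
    rw [hσ, hσ]
    exact List.pairwise_iff_get.mp hpw _ _ (by simpa using hkl)
  rw [Finset.disjoint_left]
  rintro ⟨x, y⟩ hx hy
  obtain ⟨⟨a, b⟩, haS, heq⟩ := Finset.mem_image.mp hx
  have hax : a + (s : ℤ) = x := congrArg Prod.fst heq
  have hby : b = y := congrArg Prod.snd heq
  subst hax
  subst hby
  rcases Nat.eq_zero_or_pos s with hs | hs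
  · subst hs
    have h0 : ((a + ((0:ℕ) : ℤ), b) : ℤ × ℤ) = (a, b) := by norm_num
    rw [h0] at hy
    exact (Finset.disjoint_left.mp (hdisj hne) haS) hy
  · exact hnl ⟨hne, b, a, a + (s : ℤ), haS, hy, by omega⟩
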